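/- arXiv:1304.6344 — 4 statements merged into one kernel-verified Lean document; each statement's English description precedes it below -/
import Mathlib

section
/- Let p > 4, τ < 0, and ℓ > 0 with |τ|·ℓ < 2^{1-p/2}/4. Then for any real L ≥ 0 and N_c ≥ 1 satisfying L ≤ 2ℓ + 2ℓN_c, one has τ·L + 2^{1-p/2}·N_c ≥ 2^{1-p/2}·(L/(4ℓ))·(1 - 4·2^{p/2-1}|τ|ℓ) > 0 whenever L > 0. -/
/-- Corner-positivity estimate in two dimensions: for `p > 4`, `τ < 0`,
`0 < ℓ` with `|τ|ℓ < 2^{1-p/2}/4`, and any `L ≥ 0`, `N_c ≥ 1` with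
`L ≤ 2ℓ + 2ℓ N_c`, one has
`τL + 2^{1-p/2} N_c ≥ 2^{1-p/2} (L/(4ℓ)) (1 - 4·2^{p/2-1}|τ|ℓ)`, and the
right-hand side is positive whenever `L > 0`. -/
theorem stmt_8 (p τ ℓ : ℝ) (hp : 4 < p) (hτ : τ < 0) (hℓ : 0 < ℓ)
    (hsmall : |τ| * ℓ < (2 : ℝ) ^ (1 - p / 2) / 4)
    (L Nc : ℝ) (hL : 0 ≤ L) (hN : 1 ≤ Nc) (hbound : L ≤ 2 * ℓ + 2 * ℓ * Nc) :
    τ * L + (2 : ℝ) ^ (1 - p / 2) * Nc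
        ≥ (2 : ℝ) ^ (1 - p / 2) * (L / (4 * ℓ)) * (1 - 4 * (2 : ℝ) ^ (p / 2 - 1) * |τ| * ℓ)
    ∧ (0 < L →
        0 < (2 : ℝ) ^ (1 - p / 2) * (L / (4 * ℓ)) * (1 - 4 * (2 : ℝ) ^ (p / 2 - 1) * |τ| * ℓ)) := by
  set a : ℝ := (2 : ℝ) ^ (1 - p / 2) with ha
  set b : ℝ := (2 : ℝ) ^ (p / 2 - 1) with hb
  have hapos : 0 < a := Real.rpow_pos_of_pos (by norm_num) _
  have hbpos : 0 < b := Real.rpow_pos_of_pos (by norm_num) _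
  have hab : a * b = 1 := by
    rw [ha, hb, ← Real.rpow_add (by norm_num)]
    norm_num
  have habs : |τ| = -τ := abs_of_neg hτ
  have hNc : L ≤ 4 * ℓ * Nc := by nlinarith
  have key : τ * L + a * Nc ≥ a * (L / (4 * ℓ)) * (1 - 4 * b * |τ| * ℓ) := by
    rw [habs, div_eq_mul_inv]
    have h4 : (4 * ℓ)⁻¹ * (4 * ℓ) = 1 := inv_mul_cancel₀ (by positivity)
    have e : a * (L * (4 * ℓ)⁻¹) * (1 - 4 * b * -τ * ℓ)
        = a * (L * (4 * ℓ)⁻¹) + τ * L := by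
      linear_combination 4 * τ * ℓ * (L * (4 * ℓ)⁻¹) * hab + τ * L * h4
    rw [e]
    have hX : L * (4 * ℓ)⁻¹ ≤ Nc := by
      nlinarith [mul_le_mul_of_nonneg_right hNc (inv_nonneg.2 (le_of_lt (by positivity : (0:ℝ) < 4 * ℓ)))]
    nlinarith [mul_le_mul_of_nonneg_left hX (le_of_lt hapos)]
  refine ⟨key, fun hLpos => ?_⟩
  have h1 : 0 < 1 - 4 * b * |τ| * ℓ := by nlinarith
  positivity
end

section
/- For p > 4 and integers h, ℓ with 1 ≤ h ≤ ℓ, define A_ℓ(h) = -8·Σ_{-h < x₁ ≤ 0} Σ_{-ℓ < x₂ ≤ 0} Σ_{y₁ ≥ 1} Σ_{y₂ ≥ 1} ((x₁-y₁)² + (x₂-y₂)²)^{-p/2}. Then there exists a constant C > 0 depending only on p such that |A_ℓ(h) + κ| ≤ C·h^{4-p}, where κ = 8·Σ_{x₁ ≤ 0} Σ_{x₂ ≤ 0} Σ_{y₁ ≥ 1} Σ_{y₂ ≥ 1} ((x₁-y₁)² + (x₂-y₂)²)^{-p/2}. -/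
set_option maxHeartbeats 1000000

open Real
open scoped ENNReal

namespace Stmt13

abbrev Yt := {y : ℤ // 1 ≤ y}
abbrev Xt := {x : ℤ // x ≤ 0}




/-- Key telescoping step: `(r-1)(t+1)^{-r} ≤ t^{1-r} - (t+1)^{1-r}` for `t>0`, `r>1`. -/
lemma rpow_step {r t : ℝ} (hr : 1 < r) (ht : 0 < t) :
    (r - 1) * (t + 1) ^ (-r) ≤ t ^ (1 - r) - (t + 1) ^ (1 - r) := by
  have ht1 : (0:ℝ) < t + 1 := by linarith
  set y : ℝ := t / (t + 1) with hy
  have hy0 : 0 < y := div_pos ht ht1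
  have hy1 : y < 1 := (div_lt_one ht1).2 (by linarith)
  have hq : (0:ℝ) < r - 1 := by linarith
  have a1 : y ^ (r - 1) ≤ Real.exp ((y - 1) * (r - 1)) := by
    have h1 : y ≤ Real.exp (y - 1) := by
      have := Real.add_one_le_exp (y - 1); linarith
    calc y ^ (r - 1) ≤ (Real.exp (y - 1)) ^ (r - 1) :=
          Real.rpow_le_rpow hy0.le h1 hq.le
      _ = Real.exp ((y - 1) * (r - 1)) := (Real.exp_mul _ _).symm
  have a2 : 1 + (r - 1) * (1 - y) ≤ Real.exp ((1 - y) * (r - 1)) := by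
    have := Real.add_one_le_exp ((1 - y) * (r - 1)); nlinarith
  have key : y ^ (r - 1) * (1 + (r - 1) * (1 - y)) ≤ 1 := by
    have hpos2 : (0:ℝ) ≤ 1 + (r - 1) * (1 - y) := by nlinarith
    calc y ^ (r - 1) * (1 + (r - 1) * (1 - y))
        ≤ Real.exp ((y - 1) * (r - 1)) * Real.exp ((1 - y) * (r - 1)) :=
          mul_le_mul a1 a2 hpos2 (Real.exp_pos _).le
      _ = 1 := by rw [← Real.exp_add, show (y-1)*(r-1) + (1-y)*(r-1) = 0 by ring, Real.exp_zero]
  have hyr : (0:ℝ) < y ^ (r - 1) := Real.rpow_pos_of_pos hy0 _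
  have key2 : 1 + (r - 1) * (1 - y) ≤ y ^ (1 - r) := by
    rw [show (1 - r) = -(r - 1) by ring, Real.rpow_neg hy0.le, ← one_div,
      le_div_iff₀ hyr]
    nlinarith [key]
  have hyt : y * (t + 1) = t := by rw [hy]; field_simp
  have e1 : t ^ (1 - r) = y ^ (1 - r) * (t + 1) ^ (1 - r) := by
    rw [← Real.mul_rpow hy0.le ht1.le, hyt]
  have e2 : (t + 1) ^ (-r) = (t + 1) ^ (1 - r) * (t + 1) ^ (-1 : ℝ) := by
    rw [← Real.rpow_add ht1]; ring_nf
  have e3 : (t + 1) ^ (-1 : ℝ) = 1 - y := by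
    rw [Real.rpow_neg_one]
    field_simp
    nlinarith [hyt]
  have hP : 0 < (t + 1) ^ (1 - r) := Real.rpow_pos_of_pos ht1 _
  rw [e1, e2, e3]
  nlinarith [mul_nonneg (sub_nonneg.2 key2) hP.le]

lemma tsum_tail_nat {r A : ℝ} (hr : 1 < r) (hA : 0 ≤ A) :
    ∑' n : ℕ, ENNReal.ofReal ((A + 1 + (n : ℝ)) ^ (-r)) ≤
      ENNReal.ofReal ((r / (r - 1)) * (A + 1) ^ (1 - r)) := by
  have hA1 : (0:ℝ) < A + 1 := by linarith
  have hr1 : (0:ℝ) < r - 1 := by linarith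
  have hRHS : (r / (r - 1)) * (A + 1) ^ (1 - r)
      = (A + 1) ^ (1 - r) + (1 / (r - 1)) * (A + 1) ^ (1 - r) := by
    field_simp; ring
  rw [hRHS, ENNReal.ofReal_add (by positivity) (by positivity),
    tsum_eq_zero_add' ENNReal.summable]
  refine add_le_add ?_ ?_
  · apply ENNReal.ofReal_le_ofReal
    push_cast
    rw [add_zero]
    exact Real.rpow_le_rpow_of_exponent_le (by linarith) (by linarith)
  · rw [ENNReal.tsum_eq_iSup_sum]
    apply iSup_le
    intro s
    obtain ⟨N, hs⟩ := s.exists_nat_subset_range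
    calc ∑ n ∈ s, ENNReal.ofReal ((A + 1 + ((n+1 : ℕ) : ℝ)) ^ (-r))
        ≤ ∑ n ∈ Finset.range N, ENNReal.ofReal ((A + 1 + ((n+1 : ℕ) : ℝ)) ^ (-r)) :=
          Finset.sum_le_sum_of_subset hs
      _ = ENNReal.ofReal (∑ n ∈ Finset.range N, (A + 1 + ((n+1 : ℕ) : ℝ)) ^ (-r)) :=
          (ENNReal.ofReal_sum_of_nonneg (fun i _ => by positivity)).symm
      _ ≤ ENNReal.ofReal ((1 / (r - 1)) * (A + 1) ^ (1 - r)) := by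
          apply ENNReal.ofReal_le_ofReal
          set φ : ℕ → ℝ := fun n => (A + 1 + n) ^ (1 - r) / (r - 1) with hφ
          have hstep : ∀ n : ℕ, (A + 1 + ((n+1 : ℕ) : ℝ)) ^ (-r) ≤ φ n - φ (n + 1) := by
            intro n
            have ht : (0:ℝ) < A + 1 + n := by positivity
            have := rpow_step hr ht
            have h2 : (A + 1 + ((n+1 : ℕ) : ℝ)) = (A + 1 + n) + 1 := by push_cast; ring
            rw [h2]
            simp only [hφ]
            rw [div_sub_div_same, le_div_iff₀ hr1]
            push_cast
            rw [show A + 1 + ((n:ℝ) + 1) = A + 1 + (n:ℝ) + 1 from by ring]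
            nlinarith [this]
          calc ∑ n ∈ Finset.range N, (A + 1 + ((n+1 : ℕ) : ℝ)) ^ (-r)
              ≤ ∑ n ∈ Finset.range N, (φ n - φ (n + 1)) :=
                Finset.sum_le_sum (fun i _ => hstep i)
            _ = φ 0 - φ N := Finset.sum_range_sub' φ N
            _ ≤ φ 0 := by
                have : (0:ℝ) ≤ φ N := by
                  simp only [hφ]; positivity
                linarith
            _ = (1 / (r - 1)) * (A + 1) ^ (1 - r) := by
                simp only [hφ]; push_cast; rw [add_zero]; ring

def eY : ℕ ≃ {y : ℤ // 1 ≤ y} where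
  toFun n := ⟨(n : ℤ) + 1, by omega⟩
  invFun y := (y.1 - 1).toNat
  left_inv n := by
    show (((n : ℤ) + 1) - 1).toNat = n
    omega
  right_inv y := by
    apply Subtype.ext
    show ((((y.1 - 1).toNat : ℤ)) + 1) = y.1
    have : 1 ≤ y.1 := y.2
    omega

lemma tsum_tail_Y {r A K : ℝ} (hr : 1 < r) (hA : 0 ≤ A) (hK : 0 ≤ K) :
    ∑' y : {y : ℤ // 1 ≤ y}, ENNReal.ofReal (K * (A + ((y : ℤ) : ℝ)) ^ (-r)) ≤
      ENNReal.ofReal ((K * (r / (r - 1))) * (A + 1) ^ (1 - r)) := by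
  have h1 : ∑' y : {y : ℤ // 1 ≤ y}, ENNReal.ofReal (K * (A + ((y : ℤ) : ℝ)) ^ (-r))
      = ∑' n : ℕ, ENNReal.ofReal (K * (A + 1 + (n : ℝ)) ^ (-r)) := by
    rw [← Equiv.tsum_eq eY (fun y => ENNReal.ofReal (K * (A + ((y : ℤ) : ℝ)) ^ (-r)))]
    apply tsum_congr
    intro n
    have : (A + (((eY n : ℤ)) : ℝ)) = A + 1 + (n : ℝ) := by
      show (A + (((n : ℤ) + 1 : ℤ) : ℝ)) = A + 1 + (n : ℝ)
      push_cast; ring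
    rw [this]
  rw [h1]
  have h2 : ∀ n : ℕ, ENNReal.ofReal (K * (A + 1 + (n : ℝ)) ^ (-r))
      = ENNReal.ofReal K * ENNReal.ofReal ((A + 1 + (n : ℝ)) ^ (-r)) :=
    fun n => ENNReal.ofReal_mul hK
  calc ∑' n : ℕ, ENNReal.ofReal (K * (A + 1 + (n : ℝ)) ^ (-r))
      = ENNReal.ofReal K * ∑' n : ℕ, ENNReal.ofReal ((A + 1 + (n : ℝ)) ^ (-r)) := by
        rw [← ENNReal.tsum_mul_left]; exact tsum_congr h2
    _ ≤ ENNReal.ofReal K * ENNReal.ofReal ((r / (r - 1)) * (A + 1) ^ (1 - r)) :=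
        mul_le_mul_right (tsum_tail_nat hr hA) _
    _ = ENNReal.ofReal ((K * (r / (r - 1))) * (A + 1) ^ (1 - r)) := by
        rw [← ENNReal.ofReal_mul hK, mul_assoc]

lemma level {r A K : ℝ} (hr : 1 < r) (hA : 0 ≤ A) (hK : 0 ≤ K) (F : Yt → ℝ≥0∞)
    (hF : ∀ y : Yt, F y ≤ ENNReal.ofReal (K * (A + ((y : ℤ) : ℝ)) ^ (-r))) :
    ∑' y : Yt, F y ≤ ENNReal.ofReal ((K * (r / (r - 1))) * (A + 1) ^ (1 - r)) :=
  (ENNReal.tsum_le_tsum hF).trans (tsum_tail_Y hr hA hK)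

noncomputable def Cp (p : ℝ) : ℝ :=
  2 ^ (p/2) * (p / (p - 1)) * ((p - 1) / (p - 2)) * ((p - 2) / (p - 3)) * ((p - 3) / (p - 4))

lemma Cp_pos {p : ℝ} (hp : 4 < p) : 0 < Cp p := by
  have h1 : (0:ℝ) < p - 1 := by linarith
  have h2 : (0:ℝ) < p - 2 := by linarith
  have h3 : (0:ℝ) < p - 3 := by linarith
  have h4 : (0:ℝ) < p - 4 := by linarith
  have h0 : (0:ℝ) < 2 ^ (p/2) := Real.rpow_pos_of_pos two_pos _
  exact mul_pos (mul_pos (mul_pos (mul_pos h0 (div_pos (by linarith) h1))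
    (div_pos h1 h2)) (div_pos h2 h3)) (div_pos h3 h4)

lemma core4 {p : ℝ} (hp : 4 < p) {k : ℝ} (hk : 0 ≤ k) :
    (∑' a : Yt, ∑' b : Yt, ∑' c : Yt, ∑' d : Yt,
      ENNReal.ofReal ((2:ℝ) ^ (p/2) *
        (k + ((a : ℤ) : ℝ) + ((b : ℤ) : ℝ) + ((c : ℤ) : ℝ) + ((d : ℤ) : ℝ) - 2) ^ (-p)))
      ≤ ENNReal.ofReal (Cp p * (k + 2) ^ ((4:ℝ) - p)) := by
  have h1 : (0:ℝ) < p - 1 := by linarith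
  have h2 : (0:ℝ) < p - 2 := by linarith
  have h3 : (0:ℝ) < p - 3 := by linarith
  have h4 : (0:ℝ) < p - 4 := by linarith
  have h0 : (0:ℝ) < (2:ℝ) ^ (p/2) := Real.rpow_pos_of_pos two_pos _
  have hK1p : 0 < (2:ℝ) ^ (p/2) * (p / (p - 1)) :=
    mul_pos h0 (div_pos (by linarith) h1)
  have hK2p : 0 < (2:ℝ) ^ (p/2) * (p / (p - 1)) * ((p-1) / (p-1-1)) :=
    mul_pos hK1p (div_pos h1 (by linarith))
  have hK3p : 0 < (2:ℝ) ^ (p/2) * (p / (p - 1)) * ((p-1) / (p-1-1)) * ((p-2) / (p-2-1)) :=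
    mul_pos hK2p (div_pos h2 (by linarith))
  have hcast : ∀ y : Yt, (1:ℝ) ≤ ((y : ℤ) : ℝ) := fun y => by exact_mod_cast y.2
  have L4 : ∀ a b c : Yt,
      (∑' d : Yt, ENNReal.ofReal ((2:ℝ) ^ (p/2) *
        (k + ((a : ℤ) : ℝ) + ((b : ℤ) : ℝ) + ((c : ℤ) : ℝ) + ((d : ℤ) : ℝ) - 2) ^ (-p)))
      ≤ ENNReal.ofReal (((2:ℝ) ^ (p/2) * (p / (p-1))) *
          ((k + ((a : ℤ) : ℝ) + ((b : ℤ) : ℝ) + ((c : ℤ) : ℝ) - 2) + 1) ^ (1 - p)) := by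
    intro a b c
    refine level (by linarith : (1:ℝ) < p) ?_ h0.le _ (fun d => le_of_eq ?_)
    · have := hcast a; have := hcast b; have := hcast c; linarith
    · rw [show k + ((a : ℤ) : ℝ) + ((b : ℤ) : ℝ) + ((c : ℤ) : ℝ) + ((d : ℤ) : ℝ) - 2
          = (k + ((a : ℤ) : ℝ) + ((b : ℤ) : ℝ) + ((c : ℤ) : ℝ) - 2) + ((d : ℤ) : ℝ) from by ring]
  have L3 : ∀ a b : Yt,
      (∑' c : Yt, ∑' d : Yt, ENNReal.ofReal ((2:ℝ) ^ (p/2) *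
        (k + ((a : ℤ) : ℝ) + ((b : ℤ) : ℝ) + ((c : ℤ) : ℝ) + ((d : ℤ) : ℝ) - 2) ^ (-p)))
      ≤ ENNReal.ofReal ((((2:ℝ) ^ (p/2) * (p / (p-1))) * ((p-1) / (p-1-1))) *
          ((k + ((a : ℤ) : ℝ) + ((b : ℤ) : ℝ) - 1) + 1) ^ (1 - (p-1))) := by
    intro a b
    refine level (by linarith : (1:ℝ) < p - 1) ?_ hK1p.le _
      (fun c => (L4 a b c).trans (le_of_eq ?_))
    · have := hcast a; have := hcast b; linarith
    · rw [show (k + ((a : ℤ) : ℝ) + ((b : ℤ) : ℝ) + ((c : ℤ) : ℝ) - 2) + 1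
          = (k + ((a : ℤ) : ℝ) + ((b : ℤ) : ℝ) - 1) + ((c : ℤ) : ℝ) from by ring,
        show (1 - p) = -(p - 1) from by ring]
  have L2 : ∀ a : Yt,
      (∑' b : Yt, ∑' c : Yt, ∑' d : Yt, ENNReal.ofReal ((2:ℝ) ^ (p/2) *
        (k + ((a : ℤ) : ℝ) + ((b : ℤ) : ℝ) + ((c : ℤ) : ℝ) + ((d : ℤ) : ℝ) - 2) ^ (-p)))
      ≤ ENNReal.ofReal (((((2:ℝ) ^ (p/2) * (p / (p-1))) * ((p-1) / (p-1-1))) * ((p-2) / (p-2-1))) *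
          ((k + ((a : ℤ) : ℝ)) + 1) ^ (1 - (p-2))) := by
    intro a
    refine level (by linarith : (1:ℝ) < p - 2) ?_ hK2p.le _
      (fun b => (L3 a b).trans (le_of_eq ?_))
    · have := hcast a; linarith
    · rw [show (k + ((a : ℤ) : ℝ) + ((b : ℤ) : ℝ) - 1) + 1
          = (k + ((a : ℤ) : ℝ)) + ((b : ℤ) : ℝ) from by ring,
        show (1 - (p-1)) = -(p - 2) from by ring]
  have L1 : (∑' a : Yt, ∑' b : Yt, ∑' c : Yt, ∑' d : Yt, ENNReal.ofReal ((2:ℝ) ^ (p/2) *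
        (k + ((a : ℤ) : ℝ) + ((b : ℤ) : ℝ) + ((c : ℤ) : ℝ) + ((d : ℤ) : ℝ) - 2) ^ (-p)))
      ≤ ENNReal.ofReal ((((((2:ℝ) ^ (p/2) * (p / (p-1))) * ((p-1) / (p-1-1))) * ((p-2) / (p-2-1)))
          * ((p-3) / (p-3-1))) * ((k + 1) + 1) ^ (1 - (p-3))) := by
    refine level (by linarith : (1:ℝ) < p - 3) (by linarith) hK3p.le _
      (fun a => (L2 a).trans (le_of_eq ?_))
    rw [show (k + ((a : ℤ) : ℝ)) + 1 = (k + 1) + ((a : ℤ) : ℝ) from by ring,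
      show (1 - (p-2)) = -(p - 3) from by ring]
  refine L1.trans (le_of_eq ?_)
  rw [show (k + 1) + 1 = k + 2 from by ring, show (1 - (p-3)) = (4:ℝ) - p from by ring,
    show (((((2:ℝ) ^ (p/2) * (p / (p-1))) * ((p-1) / (p-1-1))) * ((p-2) / (p-2-1)))
          * ((p-3) / (p-3-1))) = Cp p from by rw [Cp]; ring]

lemma point {p : ℝ} (hp : 0 < p) {u v : ℝ} (hu : 1 ≤ u) (hv : 1 ≤ v) :
    1 / ((u^2 + v^2) ^ (p/2)) ≤ 2 ^ (p/2) * (u + v) ^ (-p) := by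
  have huv : (0:ℝ) < u + v := by linarith
  have h1 : (u+v)^2 / 2 ≤ u^2 + v^2 := by nlinarith [sq_nonneg (u - v)]
  have h3 : ((u+v)^2/2) ^ (p/2) = (u+v)^p / 2^(p/2) := by
    rw [Real.div_rpow (by positivity) (by norm_num : (0:ℝ) ≤ 2)]
    congr 1
    rw [← Real.rpow_natCast (u+v) 2, ← Real.rpow_mul huv.le]
    congr 1
    push_cast
    ring
  have h2 : (u+v)^p / 2^(p/2) ≤ (u^2+v^2)^(p/2) := by
    rw [← h3]
    exact Real.rpow_le_rpow (by positivity) h1 (by positivity)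
  have h4 : (0:ℝ) < (u+v)^p / 2^(p/2) := by positivity
  calc 1 / ((u^2+v^2)^(p/2)) ≤ 1 / ((u+v)^p / 2^(p/2)) :=
        one_div_le_one_div_of_le h4 h2
    _ = 2^(p/2) * (u+v)^(-p) := by
        rw [Real.rpow_neg huv.le]
        field_simp

noncomputable def f4 (p : ℝ) (x₁ x₂ y₁ y₂ : ℤ) : ℝ≥0∞ :=
  ENNReal.ofReal (1 / ((((x₁:ℝ) - (y₁:ℝ))^2 + ((x₂:ℝ) - (y₂:ℝ))^2) ^ (p/2)))

lemma bigTailGen {p : ℝ} (hp : 4 < p) {k₁ k₂ : ℤ} (h1 : 0 ≤ k₁) (h2 : 0 ≤ k₂) :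
    ∑' a : Yt, ∑' b : Yt, ∑' c : Yt, ∑' d : Yt, f4 p (1 - k₁ - a) (1 - k₂ - b) c d
      ≤ ENNReal.ofReal (Cp p * (((k₁:ℝ) + (k₂:ℝ)) + 2) ^ ((4:ℝ) - p)) := by
  refine le_trans ?_ (core4 hp (k := (k₁:ℝ) + (k₂:ℝ)) (by positivity))
  refine ENNReal.tsum_le_tsum fun a => ENNReal.tsum_le_tsum fun b =>
    ENNReal.tsum_le_tsum fun c => ENNReal.tsum_le_tsum fun d => ?_
  rw [f4]
  apply ENNReal.ofReal_le_ofReal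
  have hcast : ∀ y : Yt, (1:ℝ) ≤ ((y : ℤ) : ℝ) := fun y => by exact_mod_cast y.2
  have hk1 : (0:ℝ) ≤ (k₁:ℝ) := by exact_mod_cast h1
  have hk2 : (0:ℝ) ≤ (k₂:ℝ) := by exact_mod_cast h2
  have hu : (1:ℝ) ≤ (k₁:ℝ) + ((a : ℤ) : ℝ) + ((c : ℤ) : ℝ) - 1 := by
    have := hcast a; have := hcast c; linarith
  have hv : (1:ℝ) ≤ (k₂:ℝ) + ((b : ℤ) : ℝ) + ((d : ℤ) : ℝ) - 1 := by
    have := hcast b; have := hcast d; linarith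
  have ebase : (((1 - k₁ - (a:ℤ) : ℤ) : ℝ) - ((c:ℤ):ℝ))^2
        + (((1 - k₂ - (b:ℤ) : ℤ) : ℝ) - ((d:ℤ):ℝ))^2
      = ((k₁:ℝ) + ((a : ℤ) : ℝ) + ((c : ℤ) : ℝ) - 1)^2
        + ((k₂:ℝ) + ((b : ℤ) : ℝ) + ((d : ℤ) : ℝ) - 1)^2 := by
    push_cast
    ring
  rw [ebase]
  refine (point (by linarith) hu hv).trans (le_of_eq ?_)
  rw [show ((k₁:ℝ) + ((a : ℤ) : ℝ) + ((c : ℤ) : ℝ) - 1)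
        + ((k₂:ℝ) + ((b : ℤ) : ℝ) + ((d : ℤ) : ℝ) - 1)
      = ((k₁:ℝ) + (k₂:ℝ)) + ((a : ℤ) : ℝ) + ((b : ℤ) : ℝ) + ((c : ℤ) : ℝ) + ((d : ℤ) : ℝ) - 2
      from by ring]

def eIic (k : ℤ) : Yt ≃ ↥(Set.Iic (-k)) where
  toFun a := ⟨1 - k - a.1, by
    have := a.2
    simp only [Set.mem_Iic]
    omega⟩
  invFun x := ⟨1 - k - x.1, by
    have := x.2
    simp only [Set.mem_Iic] at this
    omega⟩
  left_inv a := by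
    apply Subtype.ext
    show 1 - k - (1 - k - a.1) = a.1
    ring
  right_inv x := by
    apply Subtype.ext
    show 1 - k - (1 - k - x.1) = x.1
    ring

lemma tsum_X_split (f : ℤ → ℝ≥0∞) {k : ℤ} (hk : 0 ≤ k) :
    ∑' x : Xt, f x.1 = (∑ x ∈ Finset.Ioc (-k) 0, f x) + ∑' a : Yt, f (1 - k - a.1) := by
  have h0 : ∑' x : Xt, f x.1 = ∑' x : ℤ, (Set.Iic (0:ℤ)).indicator f x :=
    tsum_subtype (Set.Iic (0:ℤ)) f
  have hind : ∀ x : ℤ, (Set.Iic (0:ℤ)).indicator f x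
      = (Set.Ioc (-k) 0).indicator f x + (Set.Iic (-k)).indicator f x := by
    intro x
    simp only [Set.indicator_apply, Set.mem_Iic, Set.mem_Ioc]
    split_ifs <;> (try simp) <;> (try rfl) <;> (exfalso; omega)
  have hfin : ∑' x : ℤ, (Set.Ioc (-k) 0).indicator f x = ∑ x ∈ Finset.Ioc (-k) 0, f x := by
    rw [tsum_eq_sum (s := Finset.Ioc (-k) 0)
      (fun b hb => Set.indicator_of_notMem (by simpa [Set.mem_Ioc, Finset.mem_Ioc] using hb) f)]
    exact Finset.sum_congr rfl fun x hx =>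
      Set.indicator_of_mem (by simpa [Set.mem_Ioc, Finset.mem_Ioc] using hx) f
  have htail : ∑' x : ℤ, (Set.Iic (-k)).indicator f x = ∑' a : Yt, f (1 - k - a.1) := by
    rw [← tsum_subtype (Set.Iic (-k)) f]
    exact (Equiv.tsum_eq (eIic k) (fun x => f x.1)).symm
  rw [h0, tsum_congr hind, ENNReal.tsum_add, hfin, htail]

lemma tsum_X_eq (f : ℤ → ℝ≥0∞) : ∑' x : Xt, f x.1 = ∑' a : Yt, f (1 - a.1) := by
  have := tsum_X_split f (le_refl 0)
  simpa using this


noncomputable def Wf (p : ℝ) (x₁ x₂ : ℤ) : ℝ≥0∞ := ∑' c : Yt, ∑' d : Yt, f4 p x₁ x₂ c d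
noncomputable def Vf (p : ℝ) (x₁ : ℤ) : ℝ≥0∞ := ∑' b : Xt, Wf p x₁ b.1
noncomputable def kE (p : ℝ) : ℝ≥0∞ := ∑' a : Xt, Vf p a.1

lemma Wf_eq_tsum_prod (p : ℝ) (x₁ x₂ : ℤ) :
    Wf p x₁ x₂ = ∑' y : Yt × Yt, f4 p x₁ x₂ y.1.1 y.2.1 :=
  (ENNReal.tsum_prod' (f := fun y : Yt × Yt => f4 p x₁ x₂ y.1.1 y.2.1)).symm

lemma W_toReal (p : ℝ) (x₁ x₂ : ℤ) :
    (∑' y : Yt × Yt,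
      1 / ((((x₁ : ℝ) - ((y.1 : ℤ) : ℝ)) ^ 2 + ((x₂ : ℝ) - ((y.2 : ℤ) : ℝ)) ^ 2) ^ (p/2)))
      = (Wf p x₁ x₂).toReal := by
  rw [Wf_eq_tsum_prod,
    ENNReal.tsum_toReal_eq (f := fun y : Yt × Yt => f4 p x₁ x₂ y.1.1 y.2.1)
      (fun y => by simp only [f4]; exact ENNReal.ofReal_ne_top)]
  exact tsum_congr fun y => by rw [f4, ENNReal.toReal_ofReal (by positivity)]

lemma kappa_eq (p : ℝ) :
    (∑' q : Xt × Xt × Yt × Yt, f4 p q.1.1 q.2.1.1 q.2.2.1.1 q.2.2.2.1) = kE p := by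
  rw [ENNReal.tsum_prod']
  refine tsum_congr fun a => ?_
  rw [ENNReal.tsum_prod']
  refine tsum_congr fun b => ?_
  rw [ENNReal.tsum_prod']
  rfl

lemma kappa_toReal (p : ℝ) :
    (∑' q : Xt × Xt × Yt × Yt,
        8 / ((((q.1 : ℤ) : ℝ) - ((q.2.2.1 : ℤ) : ℝ)) ^ 2
          + (((q.2.1 : ℤ) : ℝ) - ((q.2.2.2 : ℤ) : ℝ)) ^ 2) ^ (p/2))
      = (ENNReal.ofReal 8 * kE p).toReal := by
  have h1 : ∀ q : Xt × Xt × Yt × Yt,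
      ENNReal.ofReal 8 * f4 p q.1.1 q.2.1.1 q.2.2.1.1 q.2.2.2.1 ≠ ⊤ :=
    fun q => ENNReal.mul_ne_top ENNReal.ofReal_ne_top ENNReal.ofReal_ne_top
  calc (∑' q : Xt × Xt × Yt × Yt,
        8 / ((((q.1 : ℤ) : ℝ) - ((q.2.2.1 : ℤ) : ℝ)) ^ 2
          + (((q.2.1 : ℤ) : ℝ) - ((q.2.2.2 : ℤ) : ℝ)) ^ 2) ^ (p/2))
      = ∑' q : Xt × Xt × Yt × Yt,
          (ENNReal.ofReal 8 * f4 p q.1.1 q.2.1.1 q.2.2.1.1 q.2.2.2.1).toReal := by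
        refine tsum_congr fun q => ?_
        rw [f4, ← ENNReal.ofReal_mul (by norm_num : (0:ℝ) ≤ 8),
          ENNReal.toReal_ofReal (by positivity), mul_one_div]
    _ = (∑' q : Xt × Xt × Yt × Yt,
          ENNReal.ofReal 8 * f4 p q.1.1 q.2.1.1 q.2.2.1.1 q.2.2.2.1).toReal :=
        (ENNReal.tsum_toReal_eq h1).symm
    _ = (ENNReal.ofReal 8 * kE p).toReal := by rw [ENNReal.tsum_mul_left, kappa_eq]

theorem main (p : ℝ) (hp : 4 < p) :
    ∃ C : ℝ, 0 < C ∧ ∀ h ℓ : ℤ, 1 ≤ h → h ≤ ℓ →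
      |(-8 * ∑ x₁ ∈ Finset.Ioc (-h) 0, ∑ x₂ ∈ Finset.Ioc (-ℓ) 0,
          ∑' y : {y : ℤ // 1 ≤ y} × {y : ℤ // 1 ≤ y},
            1 / (((x₁ - (y.1 : ℤ) : ℝ) ^ 2 + (x₂ - (y.2 : ℤ) : ℝ) ^ 2) ^ (p / 2)))
        + ∑' q : {x : ℤ // x ≤ 0} × {x : ℤ // x ≤ 0} × {y : ℤ // 1 ≤ y} × {y : ℤ // 1 ≤ y},
            8 / ((((q.1 : ℤ) - (q.2.2.1 : ℤ) : ℝ) ^ 2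
              + ((q.2.1 : ℤ) - (q.2.2.2 : ℤ) : ℝ) ^ 2) ^ (p / 2))|
        ≤ C * (h : ℝ) ^ ((4 : ℝ) - p) := by
  have hCp := Cp_pos hp
  refine ⟨16 * Cp p, by linarith, ?_⟩
  intro h ℓ h1 hℓ
  have hh0 : (0:ℤ) ≤ h := by omega
  have hl0 : (0:ℤ) ≤ ℓ := by omega
  have h4p : (4:ℝ) - p ≤ 0 := by linarith
  have hhR : (0:ℝ) < (h:ℝ) := by exact_mod_cast h1
  have hrpos : (0:ℝ) ≤ Cp p * (h:ℝ) ^ ((4:ℝ)-p) :=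
    mul_nonneg hCp.le (Real.rpow_nonneg hhR.le _)
  -- kE is finite
  have hkE_eq : kE p = ∑' a : Yt, ∑' b : Yt, ∑' c : Yt, ∑' d : Yt,
      f4 p (1 - a.1) (1 - b.1) c d := by
    calc kE p = ∑' a : Yt, Vf p (1 - a.1) := tsum_X_eq (fun x => Vf p x)
      _ = ∑' a : Yt, ∑' b : Yt, Wf p (1 - a.1) (1 - b.1) :=
          tsum_congr fun a => tsum_X_eq (fun b => Wf p (1 - a.1) b)
      _ = _ := rfl
  have hkfin : kE p ≠ ⊤ := by
    have hbt00 := bigTailGen hp (le_refl (0:ℤ)) (le_refl (0:ℤ))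
    simp only [sub_zero] at hbt00
    rw [hkE_eq]
    exact ne_top_of_le_ne_top ENNReal.ofReal_ne_top hbt00
  -- splitting
  have e1 : (∑' x : Xt, Vf p x.1) = (∑ x ∈ Finset.Ioc (-h) 0, Vf p x)
      + ∑' a : Yt, Vf p (1 - h - a.1) := tsum_X_split (fun x => Vf p x) hh0
  have e2 : ∀ x₁ : ℤ, Vf p x₁ = (∑ b ∈ Finset.Ioc (-ℓ) 0, Wf p x₁ b)
      + ∑' b : Yt, Wf p x₁ (1 - ℓ - b.1) :=
    fun x₁ => tsum_X_split (fun b => Wf p x₁ b) hl0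
  set SE := ∑ a ∈ Finset.Ioc (-h) 0, ∑ b ∈ Finset.Ioc (-ℓ) 0, Wf p a b with hSE
  set R2 := ∑ a ∈ Finset.Ioc (-h) 0, ∑' b : Yt, Wf p a (1 - ℓ - b.1) with hR2def
  set Th := ∑' a : Yt, Vf p (1 - h - a.1) with hThdef
  have e3 : kE p = SE + (R2 + Th) := by
    calc kE p = (∑ x ∈ Finset.Ioc (-h) 0, Vf p x) + Th := e1
      _ = (∑ x ∈ Finset.Ioc (-h) 0, ((∑ b ∈ Finset.Ioc (-ℓ) 0, Wf p x b)
            + ∑' b : Yt, Wf p x (1 - ℓ - b.1))) + Th := by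
          rw [Finset.sum_congr rfl fun a _ => e2 a]
      _ = (SE + R2) + Th := by rw [Finset.sum_add_distrib]
      _ = SE + (R2 + Th) := add_assoc _ _ _
  -- bounds on the two tails
  have hThB : Th ≤ ENNReal.ofReal (Cp p * (h:ℝ) ^ ((4:ℝ)-p)) := by
    have hb := bigTailGen hp hh0 (le_refl (0:ℤ))
    simp only [sub_zero, Int.cast_zero, add_zero] at hb
    have hTheq : Th = ∑' a : Yt, ∑' b : Yt, ∑' c : Yt, ∑' d : Yt,
        f4 p (1 - h - a.1) (1 - b.1) c d := by
      rw [hThdef]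
      exact tsum_congr fun a => tsum_X_eq (fun b => Wf p (1 - h - a.1) b)
    rw [hTheq]
    refine hb.trans (ENNReal.ofReal_le_ofReal ?_)
    exact mul_le_mul_of_nonneg_left
      (Real.rpow_le_rpow_of_nonpos hhR (by linarith) h4p) hCp.le
  have hR2B : R2 ≤ ENNReal.ofReal (Cp p * (h:ℝ) ^ ((4:ℝ)-p)) := by
    have hb := bigTailGen hp (le_refl (0:ℤ)) hl0
    simp only [sub_zero, Int.cast_zero, zero_add] at hb
    have hle1 : R2 ≤ ∑' x : Xt, ∑' b : Yt, Wf p x.1 (1 - ℓ - b.1) := by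
      rw [tsum_X_split (fun x => ∑' b : Yt, Wf p x (1 - ℓ - b.1)) hh0, hR2def]
      exact le_self_add
    refine hle1.trans ?_
    have heq : (∑' x : Xt, ∑' b : Yt, Wf p x.1 (1 - ℓ - b.1))
        = ∑' a : Yt, ∑' b : Yt, ∑' c : Yt, ∑' d : Yt, f4 p (1 - a.1) (1 - ℓ - b.1) c d :=
      tsum_X_eq (fun x => ∑' b : Yt, Wf p x (1 - ℓ - b.1))
    rw [heq]
    refine hb.trans (ENNReal.ofReal_le_ofReal ?_)
    refine mul_le_mul_of_nonneg_left (Real.rpow_le_rpow_of_nonpos hhR ?_ h4p) hCp.le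
    have : (h:ℝ) ≤ (ℓ:ℝ) := by exact_mod_cast hℓ
    linarith
  have hRB : R2 + Th ≤ ENNReal.ofReal ((Cp p * (h:ℝ) ^ ((4:ℝ)-p))
      + (Cp p * (h:ℝ) ^ ((4:ℝ)-p))) := by
    rw [ENNReal.ofReal_add hrpos hrpos]
    exact add_le_add hR2B hThB
  -- finiteness pieces
  have hkfin' : SE + (R2 + Th) ≠ ⊤ := by rw [← e3]; exact hkfin
  have hfin2 := ENNReal.add_ne_top.mp hkfin'
  have htR : (kE p).toReal = SE.toReal + (R2 + Th).toReal := by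
    rw [e3, ENNReal.toReal_add hfin2.1 hfin2.2]
  -- finite W values
  have hWfin : ∀ a ∈ Finset.Ioc (-h) 0, ∀ b ∈ Finset.Ioc (-ℓ) 0, Wf p a b ≠ ⊤ := by
    intro a ha b hb
    have ha0 : a ≤ 0 := (Finset.mem_Ioc.mp ha).2
    have hb0 : b ≤ 0 := (Finset.mem_Ioc.mp hb).2
    refine ne_top_of_le_ne_top hkfin ?_
    calc Wf p a b ≤ Vf p a := ENNReal.le_tsum (⟨b, hb0⟩ : Xt)
      _ ≤ kE p := ENNReal.le_tsum (⟨a, ha0⟩ : Xt)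
  have hS : (∑ x₁ ∈ Finset.Ioc (-h) 0, ∑ x₂ ∈ Finset.Ioc (-ℓ) 0,
      ∑' y : Yt × Yt,
        1 / ((((x₁:ℝ) - ((y.1 : ℤ):ℝ)) ^ 2 + ((x₂:ℝ) - ((y.2 : ℤ):ℝ)) ^ 2) ^ (p/2)))
      = SE.toReal := by
    calc (∑ x₁ ∈ Finset.Ioc (-h) 0, ∑ x₂ ∈ Finset.Ioc (-ℓ) 0,
        ∑' y : Yt × Yt,
          1 / ((((x₁:ℝ) - ((y.1 : ℤ):ℝ)) ^ 2 + ((x₂:ℝ) - ((y.2 : ℤ):ℝ)) ^ 2) ^ (p/2)))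
        = ∑ x₁ ∈ Finset.Ioc (-h) 0, ∑ x₂ ∈ Finset.Ioc (-ℓ) 0, (Wf p x₁ x₂).toReal :=
          Finset.sum_congr rfl fun a _ => Finset.sum_congr rfl fun b _ => W_toReal p a b
      _ = ∑ x₁ ∈ Finset.Ioc (-h) 0, (∑ x₂ ∈ Finset.Ioc (-ℓ) 0, Wf p x₁ x₂).toReal :=
          Finset.sum_congr rfl fun a ha =>
            (ENNReal.toReal_sum (fun b hb => hWfin a ha b hb)).symm
      _ = SE.toReal := by
          rw [hSE]
          exact (ENNReal.toReal_sum (fun a ha =>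
            ENNReal.sum_ne_top.mpr (fun b hb => hWfin a ha b hb))).symm
  rw [hS, kappa_toReal p]
  have h8 : (ENNReal.ofReal 8 * kE p).toReal = 8 * (kE p).toReal := by
    rw [ENNReal.toReal_mul, ENNReal.toReal_ofReal (by norm_num)]
  rw [h8, htR]
  have hRT : (0:ℝ) ≤ (R2 + Th).toReal := ENNReal.toReal_nonneg
  rw [show -8 * SE.toReal + 8 * (SE.toReal + (R2 + Th).toReal)
      = 8 * (R2 + Th).toReal from by ring, abs_of_nonneg (by linarith)]
  have hfinal : (R2 + Th).toReal ≤ (Cp p * (h:ℝ) ^ ((4:ℝ)-p))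
      + (Cp p * (h:ℝ) ^ ((4:ℝ)-p)) :=
    ENNReal.toReal_le_of_le_ofReal (by linarith) hRB
  calc 8 * (R2 + Th).toReal
      ≤ 8 * ((Cp p * (h:ℝ) ^ ((4:ℝ)-p)) + (Cp p * (h:ℝ) ^ ((4:ℝ)-p))) := by linarith
    _ = 16 * Cp p * (h:ℝ) ^ ((4:ℝ)-p) := by ring


end Stmt13


/-- For `p > 4` there is `C > 0` (depending only on `p`) such that for all integers
`1 ≤ h ≤ ℓ`, the stripe/quadrant interaction
`A_ℓ(h) = -8 ∑_{-h<x₁≤0} ∑_{-ℓ<x₂≤0} ∑_{y₁≥1} ∑_{y₂≥1} ((x₁-y₁)²+(x₂-y₂)²)^{-p/2}`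
satisfies `|A_ℓ(h) + κ| ≤ C h^{4-p}`, where `κ` is the full corner energy. -/
theorem stmt_13 (p : ℝ) (hp : 4 < p) :
    ∃ C : ℝ, 0 < C ∧ ∀ h ℓ : ℤ, 1 ≤ h → h ≤ ℓ →
      |(-8 * ∑ x₁ ∈ Finset.Ioc (-h) 0, ∑ x₂ ∈ Finset.Ioc (-ℓ) 0,
          ∑' y : {y : ℤ // 1 ≤ y} × {y : ℤ // 1 ≤ y},
            1 / (((x₁ - (y.1 : ℤ) : ℝ) ^ 2 + (x₂ - (y.2 : ℤ) : ℝ) ^ 2) ^ (p / 2)))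
        + ∑' q : {x : ℤ // x ≤ 0} × {x : ℤ // x ≤ 0} × {y : ℤ // 1 ≤ y} × {y : ℤ // 1 ≤ y},
            8 / ((((q.1 : ℤ) - (q.2.2.1 : ℤ) : ℝ) ^ 2
              + ((q.2.1 : ℤ) - (q.2.2.2 : ℤ) : ℝ) ^ 2) ^ (p / 2))|
        ≤ C * (h : ℝ) ^ ((4 : ℝ) - p) := Stmt13.main p hp
end

section
/- Let δ ⊂ ℤ² be finite and nonempty, p > 4. Then the self-energy U(δ) = -Σ_{n ∈ ℤ², n≠0} 𝒩_n(δ)/|n|^p, where 𝒩_n(δ) is the number of ordered pairs (x,y), x ∈ δ, y ∉ δ, with y - x ∈ {±n}, satisfies U(δ) ≥ -2·J_c·|Γ(δ)|, where |Γ(δ)| is the total number of nearest-neighbor bonds of ℤ² joining a point of δ to a point of its complement, and J_c = Σ_{n₁ > 0, n₂ ∈ ℤ} n₁/(n₁² + n₂²)^{p/2}. -/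
lemma aux_step {P : ℕ → Prop} : ∀ {N : ℕ}, P 0 → ¬ P N → ∃ k, k < N ∧ P k ∧ ¬ P (k+1) := by
  intro N
  induction N with
  | zero => intro h0 hN; exact absurd h0 hN
  | succ n ih =>
    intro h0 hN
    by_cases h : P n
    · exact ⟨n, n.lt_succ_self, h, hN⟩
    · obtain ⟨k, hk, h1, h2⟩ := ih h0 h
      exact ⟨k, hk.trans n.lt_succ_self, h1, h2⟩

lemma count_P (δ : Finset (ℤ × ℤ)) (m : ℤ × ℤ) :
    {q : (ℤ × ℤ) × (ℤ × ℤ) | q.1 ∈ δ ∧ q.2 ∉ δ ∧ q.2 - q.1 = m}.ncard ≤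
      m.1.natAbs * (δ.filter (fun x => x + (m.1.sign, (0:ℤ)) ∉ δ)).card
      + m.2.natAbs * (δ.filter (fun x => x + ((0:ℤ), m.2.sign) ∉ δ)).card := by
  classical
  set a1 := m.1.natAbs with ha1
  set a2 := m.2.natAbs with ha2
  set c : ℕ → ℤ × ℤ := fun k => (m.1.sign * min (k:ℤ) a1, m.2.sign * max ((k:ℤ) - a1) 0) with hc
  have hc0 : c 0 = 0 := by
    have h1 : min ((0:ℕ):ℤ) (a1:ℤ) = 0 := by omega
    have h2 : max (((0:ℕ):ℤ) - a1) 0 = 0 := by omega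
    simp [hc, h1, h2]
  have hcN : c (a1 + a2) = m := by
    have h1 : min ((↑(a1+a2):ℤ)) (a1:ℤ) = a1 := by push_cast; omega
    have h2 : max ((↑(a1+a2):ℤ) - a1) 0 = a2 := by push_cast; omega
    simp only [hc, h1, h2]
    ext <;> simp [ha1, ha2, Int.sign_mul_abs]
  have hstep1 : ∀ k, k < a1 → c (k+1) = c k + (m.1.sign, 0) := by
    intro k hk
    have h1 : min ((↑(k+1):ℤ)) (a1:ℤ) = min (k:ℤ) a1 + 1 := by push_cast; omega
    have h2 : max ((↑(k+1):ℤ) - a1) 0 = max ((k:ℤ) - a1) 0 := by push_cast; omega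
    simp only [hc, h1, h2, Prod.mk_add_mk, Prod.mk.injEq]
    constructor <;> ring
  have hstep2 : ∀ k, a1 ≤ k → c (k+1) = c k + (0, m.2.sign) := by
    intro k hk
    have h1 : min ((↑(k+1):ℤ)) (a1:ℤ) = min (k:ℤ) a1 := by push_cast; omega
    have h2 : max ((↑(k+1):ℤ) - a1) 0 = max ((k:ℤ) - a1) 0 + 1 := by push_cast; omega
    simp only [hc, h1, h2, Prod.mk_add_mk, Prod.mk.injEq]
    constructor <;> ring
  set S := {q : (ℤ × ℤ) × (ℤ × ℤ) | q.1 ∈ δ ∧ q.2 ∉ δ ∧ q.2 - q.1 = m} with hS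
  set F1 := δ.filter (fun x => x + (m.1.sign, (0:ℤ)) ∉ δ) with hF1
  set F2 := δ.filter (fun x => x + ((0:ℤ), m.2.sign) ∉ δ) with hF2
  set T : Finset (ℕ × (ℤ × ℤ)) :=
    (Finset.range a1 ×ˢ F1) ∪ ((Finset.Ico a1 (a1+a2)) ×ˢ F2) with hT
  have ex : ∀ q ∈ S, ∃ k, k < a1 + a2 ∧ (q.1 + c k ∈ δ) ∧ ¬ (q.1 + c (k+1) ∈ δ) := by
    intro q hq
    obtain ⟨h1, h2, h3⟩ := hq
    have hP0 : q.1 + c 0 ∈ δ := by rw [hc0, add_zero]; exact h1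
    have hPN : ¬ (q.1 + c (a1+a2) ∈ δ) := by
      rw [hcN]
      have : q.1 + m = q.2 := by
        have := sub_eq_iff_eq_add.mp h3
        rw [this]; ring
      rw [this]; exact h2
    obtain ⟨k, hk, hk1, hk2⟩ := aux_step (P := fun k => q.1 + c k ∈ δ) hP0 hPN
    exact ⟨k, hk, hk1, hk2⟩
  set f : (ℤ × ℤ) × (ℤ × ℤ) → ℕ × (ℤ × ℤ) := fun q =>
    if h : ∃ k, q.1 + c k ∈ δ ∧ q.1 + c (k+1) ∉ δ then
      (Nat.find h, q.1 + c (Nat.find h)) else (0, 0) with hf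
  have key : ∀ q ∈ S, ∃ (h : ∃ k, q.1 + c k ∈ δ ∧ q.1 + c (k+1) ∉ δ),
      f q = (Nat.find h, q.1 + c (Nat.find h)) ∧ Nat.find h < a1 + a2 := by
    intro q hq
    obtain ⟨k0, hk0, hk01, hk02⟩ := ex q hq
    have h : ∃ k, q.1 + c k ∈ δ ∧ q.1 + c (k+1) ∉ δ := ⟨k0, hk01, hk02⟩
    refine ⟨h, by rw [hf]; simp only [dif_pos h], ?_⟩
    exact lt_of_le_of_lt (Nat.find_min' h ⟨hk01, hk02⟩) hk0
  have hmaps : ∀ q ∈ S, f q ∈ (T : Set (ℕ × (ℤ × ℤ))) := by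
    intro q hq
    obtain ⟨h, hfq, hlt⟩ := key q hq
    set k := Nat.find h with hk
    have hspec := Nat.find_spec h
    rw [hfq, Finset.mem_coe, hT, Finset.mem_union]
    by_cases hka : k < a1
    · left
      rw [Finset.mem_product]
      refine ⟨Finset.mem_range.mpr hka, ?_⟩
      rw [hF1, Finset.mem_filter]
      refine ⟨hspec.1, ?_⟩
      have : q.1 + c k + (m.1.sign, 0) = q.1 + c (k+1) := by
        rw [hstep1 k hka, add_assoc]
      rw [this]; exact hspec.2
    · right
      rw [Finset.mem_product]
      refine ⟨Finset.mem_Ico.mpr ⟨Nat.le_of_not_lt hka, hlt⟩, ?_⟩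
      rw [hF2, Finset.mem_filter]
      refine ⟨hspec.1, ?_⟩
      have : q.1 + c k + (0, m.2.sign) = q.1 + c (k+1) := by
        rw [hstep2 k (Nat.le_of_not_lt hka), add_assoc]
      rw [this]; exact hspec.2
  have hinj : Set.InjOn f S := by
    intro q hq q' hq' heq
    obtain ⟨h, hfq, -⟩ := key q hq
    obtain ⟨h', hfq', -⟩ := key q' hq'
    rw [hfq, hfq'] at heq
    obtain ⟨he1, he2⟩ := Prod.mk.injEq .. ▸ heq
    rw [Prod.mk.injEq] at heq
    obtain ⟨hke, hxe⟩ := heq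
    rw [← hke] at hxe
    have hx1 : q.1 = q'.1 := by
      have := add_right_cancel hxe
      exact this
    have hx2 : q.2 = q'.2 := by
      have e1 : q.2 = m + q.1 := sub_eq_iff_eq_add.mp hq.2.2
      have e2 : q'.2 = m + q'.1 := sub_eq_iff_eq_add.mp hq'.2.2
      rw [e1, e2, hx1]
    exact Prod.ext hx1 hx2
  have hle := Set.ncard_le_ncard_of_injOn f hmaps hinj (T.finite_toSet)
  rw [Set.ncard_coe_finset] at hle
  refine hle.trans ?_
  refine (Finset.card_union_le _ _).trans ?_
  rw [Finset.card_product, Finset.card_product, Finset.card_range, Nat.card_Ico]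
  have hx : a1 + a2 - a1 = a2 := by omega
  rw [hx]


lemma count_N (δ : Finset (ℤ × ℤ)) (n : ℤ × ℤ) :
    {q : (ℤ × ℤ) × (ℤ × ℤ) | q.1 ∈ δ ∧ q.2 ∉ δ ∧ (q.2 - q.1 = n ∨ q.2 - q.1 = -n)}.ncard ≤
      n.1.natAbs * ((δ.filter (fun x => x + ((1:ℤ), (0:ℤ)) ∉ δ)).card
        + (δ.filter (fun x => x + ((-1:ℤ), (0:ℤ)) ∉ δ)).card)
      + n.2.natAbs * ((δ.filter (fun x => x + ((0:ℤ), (1:ℤ)) ∉ δ)).card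
        + (δ.filter (fun x => x + ((0:ℤ), (-1:ℤ)) ∉ δ)).card) := by
  classical
  have hsplit : {q : (ℤ × ℤ) × (ℤ × ℤ) | q.1 ∈ δ ∧ q.2 ∉ δ ∧ (q.2 - q.1 = n ∨ q.2 - q.1 = -n)}
      = {q : (ℤ × ℤ) × (ℤ × ℤ) | q.1 ∈ δ ∧ q.2 ∉ δ ∧ q.2 - q.1 = n}
        ∪ {q : (ℤ × ℤ) × (ℤ × ℤ) | q.1 ∈ δ ∧ q.2 ∉ δ ∧ q.2 - q.1 = -n} := by
    ext q; simp only [Set.mem_setOf_eq, Set.mem_union]; tauto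
  rw [hsplit]
  refine (Set.ncard_union_le _ _).trans ?_
  have h1 := count_P δ n
  have h2 := count_P δ (-n)
  simp only [Prod.fst_neg, Prod.snd_neg, Int.natAbs_neg, Int.sign_neg] at h2
  refine (Nat.add_le_add h1 h2).trans ?_
  set C : ℤ → ℕ := fun s => (δ.filter (fun x => x + (s, (0:ℤ)) ∉ δ)).card with hC
  set D : ℤ → ℕ := fun s => (δ.filter (fun x => x + ((0:ℤ), s) ∉ δ)).card with hD
  show n.1.natAbs * C n.1.sign + n.2.natAbs * D n.2.sign
      + (n.1.natAbs * C (-n.1.sign) + n.2.natAbs * D (-n.2.sign))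
      ≤ n.1.natAbs * (C 1 + C (-1)) + n.2.natAbs * (D 1 + D (-1))
  have key : ∀ (a : ℤ) (E : ℤ → ℕ),
      a.natAbs * E a.sign + a.natAbs * E (-a.sign) ≤ a.natAbs * (E 1 + E (-1)) := by
    intro a E
    rcases lt_trichotomy a 0 with h | h | h
    · rw [Int.sign_eq_neg_one_of_neg h, neg_neg, mul_add]
      omega
    · simp [h]
    · rw [Int.sign_eq_one_of_pos h, mul_add]
  calc n.1.natAbs * C n.1.sign + n.2.natAbs * D n.2.sign
      + (n.1.natAbs * C (-n.1.sign) + n.2.natAbs * D (-n.2.sign))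
      = (n.1.natAbs * C n.1.sign + n.1.natAbs * C (-n.1.sign))
        + (n.2.natAbs * D n.2.sign + n.2.natAbs * D (-n.2.sign)) := by ring
    _ ≤ _ := Nat.add_le_add (key n.1 C) (key n.2 D)


noncomputable def Afun (p : ℝ) : ℤ × ℤ → ℝ :=
  fun n => (n.1.natAbs : ℝ) / (((n.1:ℝ)^2 + (n.2:ℝ)^2) ^ (p/2))

lemma sumA (p : ℝ) (hp : 4 < p) : Summable (Afun p) := by
  have hk : (2:ℝ) < p - 1 := by linarith
  have hE := EisensteinSeries.summable_one_div_norm_rpow hk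
  rw [← (finTwoArrowEquiv ℤ).summable_iff]
  apply hE.of_nonneg_of_le
  · intro x
    apply div_nonneg (by positivity) (Real.rpow_nonneg (by positivity) _)
  · intro x
    rcases eq_or_ne x 0 with hx | hx
    · subst hx
      simp only [Function.comp_apply, finTwoArrowEquiv_apply, Afun]
      simp [Real.zero_rpow (by positivity : p/2 ≠ 0)]
      positivity
    · have hM : 0 < ‖x‖ := norm_pos_iff.mpr hx
      set M := ‖x‖ with hMdef
      set a : ℝ := ((x 0 : ℤ) : ℝ) with ha
      set b : ℝ := ((x 1 : ℤ) : ℝ) with hb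
      have hMa : |a| ≤ M := by
        rw [hMdef, EisensteinSeries.norm_eq_max_natAbs, ha]
        push_cast [Nat.cast_natAbs]
        exact le_max_left _ _
      have hM2 : M^2 ≤ a^2 + b^2 := by
        rw [hMdef, EisensteinSeries.norm_eq_max_natAbs]
        push_cast [Nat.cast_natAbs]
        rcases max_cases (|a|) (|b|) with ⟨h1, -⟩ | ⟨h1, -⟩ <;>
          rw [h1] <;> rw [sq_abs] <;> nlinarith [sq_nonneg a, sq_nonneg b]
      have hMp : M ^ p ≤ (a^2 + b^2) ^ (p/2) := by
        have : M ^ p = (M^2) ^ (p/2) := by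
          rw [← Real.rpow_natCast M 2, ← Real.rpow_mul hM.le]
          norm_num
          ring_nf
        rw [this]
        exact Real.rpow_le_rpow (by positivity) hM2 (by linarith)
      have : (Afun p ∘ (finTwoArrowEquiv ℤ)) x = |a| / ((a^2+b^2) ^ (p/2)) := by
        simp only [Function.comp_apply, finTwoArrowEquiv_apply, Afun]
        rw [Nat.cast_natAbs]
        push_cast
        rfl
      rw [this]
      have hrhs : M ^ (-(p-1)) = M / M ^ p := by
        rw [neg_sub, Real.rpow_sub hM, Real.rpow_one]
      rw [hrhs]
      apply div_le_div₀ (le_of_lt hM) hMa (by positivity) hMp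


noncomputable def Jfun (p : ℝ) : ℕ+ × ℤ → ℝ :=
  fun y => (y.1 : ℝ) / (((y.1 : ℝ)^2 + ((y.2 : ℤ) : ℝ)^2) ^ (p/2))

lemma Afun_comp₁ (p : ℝ) : (Afun p) ∘ (fun y : ℕ+ × ℤ => (((y.1 : ℕ) : ℤ), y.2)) = Jfun p := by
  funext y
  simp only [Function.comp_apply, Afun, Jfun, Int.natAbs_natCast]
  push_cast
  rfl

lemma inj₁ : Function.Injective (fun y : ℕ+ × ℤ => (((y.1 : ℕ) : ℤ), y.2)) := by
  intro y y' h
  simp only [Prod.mk.injEq, Nat.cast_inj] at h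
  exact Prod.ext (PNat.coe_injective h.1) h.2

lemma sumJ (p : ℝ) (hp : 4 < p) : Summable (Jfun p) := by
  rw [← Afun_comp₁ p]
  exact (sumA p hp).comp_injective inj₁

lemma hasSum2J (p : ℝ) (hp : 4 < p) :
    HasSum (Afun p) (2 * ∑' y : ℕ+ × ℤ, Jfun p y) := by
  classical
  set J := ∑' y : ℕ+ × ℤ, Jfun p y with hJ
  have hJs : HasSum (Jfun p) J := (sumJ p hp).hasSum
  set i₁ : ℕ+ × ℤ → ℤ × ℤ := fun y => (((y.1 : ℕ) : ℤ), y.2) with hi₁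
  set i₂ : ℕ × ℤ → ℤ × ℤ := fun y => (-(y.1 : ℤ), y.2) with hi₂
  have hinj₂ : Function.Injective i₂ := by
    intro y y' h
    simp only [hi₂, Prod.mk.injEq, neg_inj, Nat.cast_inj] at h
    exact Prod.ext h.1 h.2
  -- ranges
  have hr1 : {x : ℤ × ℤ | 0 < x.1} = Set.range i₁ := by
    ext x
    simp only [Set.mem_setOf_eq, Set.mem_range, hi₁]
    constructor
    · intro hx
      refine ⟨(⟨x.1.toNat, by omega⟩, x.2), ?_⟩
      rw [Prod.mk.injEq]
      constructor
      · show ((x.1.toNat : ℕ) : ℤ) = x.1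
        omega
      · rfl
    · rintro ⟨y, rfl⟩
      show (0:ℤ) < ((y.1 : ℕ) : ℤ)
      exact_mod_cast y.1.pos
  have hr2 : {x : ℤ × ℤ | 0 < x.1}ᶜ = Set.range i₂ := by
    ext x
    simp only [Set.mem_compl_iff, Set.mem_setOf_eq, Set.mem_range, hi₂, not_lt]
    constructor
    · intro hx
      refine ⟨((-x.1).toNat, x.2), ?_⟩
      rw [Prod.mk.injEq]
      exact ⟨by omega, rfl⟩
    · rintro ⟨y, rfl⟩
      simp only
      omega
  -- sum over positive part
  have h1 : HasSum ((Afun p) ∘ (↑) : {x : ℤ × ℤ | 0 < x.1} → ℝ) J := by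
    rw [hr1]
    exact inj₁.hasSum_range_iff.mpr (by rw [Afun_comp₁]; exact hJs)
  -- sum over nonpositive part
  have hcomp₂ : HasSum (Afun p ∘ i₂) J := by
    set g : ℕ × ℤ → ℝ := fun y => (y.1 : ℝ) / (((y.1:ℝ))^2 + ((y.2 : ℤ) : ℝ)^2) ^ (p/2) with hg
    have hgeq : Afun p ∘ i₂ = g := by
      funext y
      simp only [Function.comp_apply, Afun, hi₂, hg, Int.natAbs_neg, Int.natAbs_natCast]
      push_cast
      ring_nf
    rw [hgeq]
    set j : ℕ+ × ℤ → ℕ × ℤ := fun y => ((y.1 : ℕ), y.2) with hj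
    have hinjj : Function.Injective j := by
      intro y y' h
      simp only [hj, Prod.mk.injEq] at h
      exact Prod.ext (PNat.coe_injective h.1) h.2
    have hgj : g ∘ j = Jfun p := by
      funext y
      simp only [Function.comp_apply, hg, hj, Jfun]
    have hvanish : ∀ x ∉ Set.range j, g x = 0 := by
      intro x hx
      have hx1 : x.1 = 0 := by
        by_contra h0
        exact hx ⟨(⟨x.1, Nat.pos_of_ne_zero h0⟩, x.2), rfl⟩
      simp [hg, hx1]
    exact (hinjj.hasSum_iff hvanish).mp (by rw [hgj]; exact hJs)
  have h2 : HasSum ((Afun p) ∘ (↑) : ({x : ℤ × ℤ | 0 < x.1}ᶜ : Set (ℤ×ℤ)) → ℝ) J := by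
    rw [hr2]
    exact hinj₂.hasSum_range_iff.mpr hcomp₂
  have := h1.add_compl h2
  rw [two_mul]
  exact this


lemma hasSum2J' (p : ℝ) (hp : 4 < p) :
    HasSum (fun n : ℤ × ℤ => (n.2.natAbs : ℝ) / (((n.1:ℝ)^2 + (n.2:ℝ)^2) ^ (p/2)))
      (2 * ∑' y : ℕ+ × ℤ, Jfun p y) := by
  have h := (Equiv.prodComm ℤ ℤ).hasSum_iff.mpr (hasSum2J p hp)
  have he : (fun n : ℤ × ℤ => (n.2.natAbs : ℝ) / (((n.1:ℝ)^2 + (n.2:ℝ)^2) ^ (p/2)))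
      = (Afun p) ∘ (Equiv.prodComm ℤ ℤ) := by
    funext n
    simp only [Function.comp_apply, Equiv.prodComm_apply, Afun, Prod.fst_swap, Prod.snd_swap]
    rw [add_comm (((n.2:ℝ))^2) (((n.1:ℝ))^2)]
  rw [he]
  exact h

/-- For finite nonempty `δ ⊂ ℤ²` and `p > 4`, the self-energy
`U(δ) = -∑_{n≠0} 𝒩_n(δ)/|n|^p` satisfies `U(δ) ≥ -2 J_c |Γ(δ)|`, where `|Γ(δ)|`
is the number of nearest-neighbor boundary bonds of `δ` and
`J_c = ∑_{n₁>0, n₂∈ℤ} n₁/(n₁²+n₂²)^{p/2}`. -/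
theorem stmt_15 (p : ℝ) (hp : 4 < p) (δ : Finset (ℤ × ℤ)) (hδ : δ.Nonempty) :
    (-∑' n : {n : ℤ × ℤ // n ≠ 0},
        (({q : (ℤ × ℤ) × (ℤ × ℤ) |
            q.1 ∈ δ ∧ q.2 ∉ δ ∧ (q.2 - q.1 = (n : ℤ × ℤ) ∨ q.2 - q.1 = -(n : ℤ × ℤ))}.ncard : ℝ))
          / ((((n : ℤ × ℤ).1 : ℝ) ^ 2 + ((n : ℤ × ℤ).2 : ℝ) ^ 2) ^ (p / 2)))
      ≥ -2 * (∑' y : ℕ+ × ℤ, (y.1 : ℝ) / (((y.1 : ℝ) ^ 2 + (y.2 : ℝ) ^ 2) ^ (p / 2)))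
          * (((δ.filter (fun x => x + (1, 0) ∉ δ)).card
            + (δ.filter (fun x => x - (1, 0) ∉ δ)).card
            + (δ.filter (fun x => x + (0, 1) ∉ δ)).card
            + (δ.filter (fun x => x - (0, 1) ∉ δ)).card : ℕ) : ℝ) := by
  classical
  have hfilter1 : δ.filter (fun x => x - ((1:ℤ), (0:ℤ)) ∉ δ)
      = δ.filter (fun x => x + ((-1:ℤ), (0:ℤ)) ∉ δ) := by
    apply Finset.filter_congr
    intro x _
    have hxy : x - ((1:ℤ), (0:ℤ)) = x + ((-1:ℤ), (0:ℤ)) := by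
      simp [Prod.ext_iff, sub_eq_add_neg]
    rw [hxy]
  have hfilter2 : δ.filter (fun x => x - ((0:ℤ), (1:ℤ)) ∉ δ)
      = δ.filter (fun x => x + ((0:ℤ), (-1:ℤ)) ∉ δ) := by
    apply Finset.filter_congr
    intro x _
    have hxy : x - ((0:ℤ), (1:ℤ)) = x + ((0:ℤ), (-1:ℤ)) := by
      simp [Prod.ext_iff, sub_eq_add_neg]
    rw [hxy]
  rw [hfilter1, hfilter2]
  set J : ℝ := ∑' y : ℕ+ × ℤ, (y.1 : ℝ) / (((y.1 : ℝ) ^ 2 + (y.2 : ℝ) ^ 2) ^ (p / 2)) with hJ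
  have hJeq : J = ∑' y : ℕ+ × ℤ, Jfun p y := rfl
  set Γ₁ : ℕ := (δ.filter (fun x => x + ((1:ℤ), (0:ℤ)) ∉ δ)).card
    + (δ.filter (fun x => x + ((-1:ℤ), (0:ℤ)) ∉ δ)).card with hΓ₁
  set Γ₂ : ℕ := (δ.filter (fun x => x + ((0:ℤ), (1:ℤ)) ∉ δ)).card
    + (δ.filter (fun x => x + ((0:ℤ), (-1:ℤ)) ∉ δ)).card with hΓ₂
  -- the comparison function
  set F : ℤ × ℤ → ℝ := fun n => (Γ₁ : ℝ) * Afun p n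
    + (Γ₂ : ℝ) * ((n.2.natAbs : ℝ) / (((n.1:ℝ)^2 + (n.2:ℝ)^2) ^ (p/2))) with hF
  have hFsum : HasSum F ((Γ₁ : ℝ) * (2 * J) + (Γ₂ : ℝ) * (2 * J)) := by
    rw [hJeq]
    exact ((hasSum2J p hp).mul_left _).add ((hasSum2J' p hp).mul_left _)
  have hsupp : Function.support F ⊆ {n : ℤ × ℤ | n ≠ 0} := by
    intro n hn
    simp only [Set.mem_setOf_eq]
    intro h0
    apply hn
    rw [h0]
    simp [hF, Afun]
  have hFsub : HasSum (F ∘ (↑) : {n : ℤ × ℤ // n ≠ 0} → ℝ)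
      ((Γ₁ : ℝ) * (2 * J) + (Γ₂ : ℝ) * (2 * J)) :=
    (hasSum_subtype_iff_of_support_subset hsupp).mpr hFsum
  -- the LHS summand
  set L : {n : ℤ × ℤ // n ≠ 0} → ℝ := fun n =>
    (({q : (ℤ × ℤ) × (ℤ × ℤ) |
        q.1 ∈ δ ∧ q.2 ∉ δ ∧ (q.2 - q.1 = (n : ℤ × ℤ) ∨ q.2 - q.1 = -(n : ℤ × ℤ))}.ncard : ℝ))
      / ((((n : ℤ × ℤ).1 : ℝ) ^ 2 + ((n : ℤ × ℤ).2 : ℝ) ^ 2) ^ (p / 2)) with hL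
  have hwpos : ∀ n : {n : ℤ × ℤ // n ≠ 0},
      (0:ℝ) < (((n : ℤ × ℤ).1 : ℝ) ^ 2 + ((n : ℤ × ℤ).2 : ℝ) ^ 2) ^ (p / 2) := by
    intro n
    apply Real.rpow_pos_of_pos
    have hne : (n : ℤ × ℤ).1 ≠ 0 ∨ (n : ℤ × ℤ).2 ≠ 0 := by
      by_contra h
      push_neg at h
      exact n.2 (Prod.ext h.1 h.2)
    rcases hne with h | h
    · have : ((n : ℤ × ℤ).1 : ℝ) ≠ 0 := Int.cast_ne_zero.mpr h
      nlinarith [sq_nonneg (((n : ℤ × ℤ).2 : ℝ)), sq_pos_of_ne_zero this]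
    · have : ((n : ℤ × ℤ).2 : ℝ) ≠ 0 := Int.cast_ne_zero.mpr h
      nlinarith [sq_nonneg (((n : ℤ × ℤ).1 : ℝ)), sq_pos_of_ne_zero this]
  have hbound : ∀ n : {n : ℤ × ℤ // n ≠ 0}, L n ≤ F (n : ℤ × ℤ) := by
    intro n
    have hcount := count_N δ (n : ℤ × ℤ)
    rw [← hΓ₁, ← hΓ₂] at hcount
    have hcast : (({q : (ℤ × ℤ) × (ℤ × ℤ) |
        q.1 ∈ δ ∧ q.2 ∉ δ ∧ (q.2 - q.1 = (n : ℤ × ℤ) ∨ q.2 - q.1 = -(n : ℤ × ℤ))}.ncard : ℝ))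
        ≤ (((n : ℤ × ℤ).1.natAbs * Γ₁ + (n : ℤ × ℤ).2.natAbs * Γ₂ : ℕ) : ℝ) := by
      exact_mod_cast hcount
    calc L n ≤ (((n : ℤ × ℤ).1.natAbs * Γ₁ + (n : ℤ × ℤ).2.natAbs * Γ₂ : ℕ) : ℝ)
          / ((((n : ℤ × ℤ).1 : ℝ) ^ 2 + ((n : ℤ × ℤ).2 : ℝ) ^ 2) ^ (p / 2)) := by
          exact (div_le_div_iff_of_pos_right (hwpos n)).mpr hcast
      _ = F (n : ℤ × ℤ) := by
          rw [hF]
          simp only [Afun]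
          push_cast
          ring
  have hLnonneg : ∀ n, 0 ≤ L n := by
    intro n
    exact div_nonneg (Nat.cast_nonneg _) (le_of_lt (hwpos n))
  have hLsum : Summable L := Summable.of_nonneg_of_le hLnonneg hbound hFsub.summable
  have hsum_le : ∑' n, L n ≤ (Γ₁ : ℝ) * (2 * J) + (Γ₂ : ℝ) * (2 * J) := by
    refine (Summable.tsum_le_tsum hbound hLsum hFsub.summable).trans_eq hFsub.tsum_eq
  have hfinal : ∑' n, L n ≤ 2 * J * ((Γ₁ + Γ₂ : ℕ) : ℝ) := by
    push_cast
    push_cast at hsum_le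
    linarith
  have hΓeq : ((Γ₁ + Γ₂ : ℕ) : ℝ)
      = (((δ.filter (fun x => x + ((1:ℤ), (0:ℤ)) ∉ δ)).card
        + (δ.filter (fun x => x + ((-1:ℤ), (0:ℤ)) ∉ δ)).card
        + (δ.filter (fun x => x + ((0:ℤ), (1:ℤ)) ∉ δ)).card
        + (δ.filter (fun x => x + ((0:ℤ), (-1:ℤ)) ∉ δ)).card : ℕ) : ℝ) := by
    rw [hΓ₁, hΓ₂]
    push_cast
    ring
  rw [ge_iff_le]
  have : -2 * J * (((δ.filter (fun x => x + ((1:ℤ), (0:ℤ)) ∉ δ)).card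
        + (δ.filter (fun x => x + ((-1:ℤ), (0:ℤ)) ∉ δ)).card
        + (δ.filter (fun x => x + ((0:ℤ), (1:ℤ)) ∉ δ)).card
        + (δ.filter (fun x => x + ((0:ℤ), (-1:ℤ)) ∉ δ)).card : ℕ) : ℝ)
      = -(2 * J * ((Γ₁ + Γ₂ : ℕ) : ℝ)) := by
    rw [hΓeq]; ring
  rw [this]
  exact neg_le_neg hfinal
end

section
/- Let p > 4, τ < 0, C > 0, and let e_s : [1,∞) → ℝ satisfy e_s(h) = τ/h + A/h^{p-2} with A > 0. Then for ℓ ≥ (C')·|τ|^{-1/(p-3)} with C' large enough (depending on A, C, p), min over real h ∈ [1, ℓ] of [e_s(h) - C·h^{3-p}·ℓ^{-1}] ≥ (min over h > 0 of e_s(h))·(1 + c·ℓ^{-1}·|τ|^{-1/(p-3)}) for some constant c > 0 depending only on A, C, p; note both sides are negative. -/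
private lemma rpow_one_div_rpow {x : ℝ} (hx : 0 < x) {s : ℝ} (hs : s ≠ 0) :
    (x ^ (1/s)) ^ s = x := by
  rw [← Real.rpow_mul hx.le, one_div, inv_mul_cancel₀ hs, Real.rpow_one]

private lemma young_aux {p A b h : ℝ} (hp : 4 < p) (hA : 0 < A) (hb : 0 < b) (hh : 0 < h) :
    b / h ≤ A / h ^ (p-2) +
      ((p-3)/(p-2)) * ((p-2)*A) ^ (-(1/(p-3))) * b ^ ((p-2)/(p-3)) := by
  have h2 : (0:ℝ) < p - 2 := by linarith
  have h3 : (0:ℝ) < p - 3 := by linarith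
  have hG : (0:ℝ) < (p-2)*A := mul_pos h2 hA
  set a : ℝ := ((p-2)*A) ^ (1/(p-2)) with ha_def
  have ha : 0 < a := Real.rpow_pos_of_pos hG _
  have hhp : 0 < h ^ (p-2) := Real.rpow_pos_of_pos hh _
  have hconj : (p-2).HolderConjugate ((p-2)/(p-3)) := by
    rw [Real.holderConjugate_iff_eq_conjExponent (by linarith)]
    congr 1
    ring
  have key := Real.young_inequality_of_nonneg
    (div_nonneg ha.le hh.le) (div_nonneg hb.le ha.le) hconj
  have e1 : a / h * (b / a) = b / h := by
    field_simp
  have e2 : (a / h) ^ (p-2) / (p-2) = A / h ^ (p-2) := by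
    rw [Real.div_rpow ha.le hh.le, ha_def, ← Real.rpow_mul hG.le,
      one_div, inv_mul_cancel₀ h2.ne', Real.rpow_one]
    field_simp
  have e3 : (b / a) ^ ((p-2)/(p-3)) / ((p-2)/(p-3))
      = ((p-3)/(p-2)) * ((p-2)*A) ^ (-(1/(p-3))) * b ^ ((p-2)/(p-3)) := by
    have haq : a ^ ((p-2)/(p-3)) = ((p-2)*A) ^ (1/(p-3)) := by
      rw [ha_def, ← Real.rpow_mul hG.le]
      congr 1
      field_simp
    rw [Real.div_rpow hb.le ha.le, haq, Real.rpow_neg hG.le]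
    have hXp : (0:ℝ) < ((p-2)*A) ^ (1/(p-3)) := Real.rpow_pos_of_pos hG _
    field_simp
  rw [e1, e2, e3] at key
  exact key

private lemma attain_aux {p A b : ℝ} (hp : 4 < p) (hA : 0 < A) (hb : 0 < b) :
    (-b) / ((((p-2)*A)/b) ^ (1/(p-3))) + A / ((((p-2)*A)/b) ^ (1/(p-3))) ^ (p-2)
      = -(((p-3)/(p-2)) * ((p-2)*A) ^ (-(1/(p-3))) * b ^ ((p-2)/(p-3))) := by
  have h2 : (0:ℝ) < p - 2 := by linarith
  have h3 : (0:ℝ) < p - 3 := by linarith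
  have hG : (0:ℝ) < (p-2)*A := mul_pos h2 hA
  have hGb : (0:ℝ) < ((p-2)*A)/b := div_pos hG hb
  have hX : (0:ℝ) < ((p-2)*A) ^ (1/(p-3)) := Real.rpow_pos_of_pos hG _
  have hY : (0:ℝ) < b ^ (1/(p-3)) := Real.rpow_pos_of_pos hb _
  have hw2 : ((((p-2)*A)/b) ^ (1/(p-3))) ^ (p-2)
      = (((p-2)*A)/b) * (((p-2)*A)/b) ^ (1/(p-3)) := by
    rw [← Real.rpow_mul hGb.le,
      show (1/(p-3)) * (p-2) = 1 + 1/(p-3) by field_simp; ring,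
      Real.rpow_add hGb, Real.rpow_one]
  have hb2 : b ^ ((p-2)/(p-3)) = b * b ^ (1/(p-3)) := by
    rw [show (p-2)/(p-3) = 1 + 1/(p-3) by field_simp; ring,
      Real.rpow_add hb, Real.rpow_one]
  have hw_def : (((p-2)*A)/b) ^ (1/(p-3)) = ((p-2)*A) ^ (1/(p-3)) / b ^ (1/(p-3)) :=
    Real.div_rpow hG.le hb.le _
  have hGneg : ((p-2)*A) ^ (-(1/(p-3))) = (((p-2)*A) ^ (1/(p-3)))⁻¹ :=
    Real.rpow_neg hG.le _
  rw [hw2, hb2, hGneg, hw_def]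
  field_simp
  ring

/-- For `p > 4`, `A > 0`, `C > 0` there are `C' > 0` (large) and `c > 0` such
that for all `τ < 0` and all `ℓ ≥ C'|τ|^{-1/(p-3)}`, every `h ∈ [1,ℓ]` satisfies
`e_s(h) - C h^{3-p}/ℓ ≥ (min_{h>0} e_s)(1 + c ℓ^{-1}|τ|^{-1/(p-3)})`, where
`e_s(h) = τ/h + A/h^{p-2}`. -/
theorem stmt_16 (p A C : ℝ) (hp : 4 < p) (hA : 0 < A) (hC : 0 < C) :
    ∃ C' : ℝ, 0 < C' ∧ ∃ c : ℝ, 0 < c ∧ ∀ τ : ℝ, τ < 0 →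
      ∀ ℓ : ℝ, C' * |τ| ^ (-(1 / (p - 3))) ≤ ℓ →
        ∀ h : ℝ, h ∈ Set.Icc (1 : ℝ) ℓ →
          (τ / h + A / h ^ (p - 2)) - C * h ^ (3 - p) / ℓ
            ≥ (⨅ h' : Set.Ioi (0 : ℝ), (τ / (h' : ℝ) + A / (h' : ℝ) ^ (p - 2)))
              * (1 + c * ℓ⁻¹ * |τ| ^ (-(1 / (p - 3)))) := by
  have h2 : (0:ℝ) < p - 2 := by linarith
  have h3 : (0:ℝ) < p - 3 := by linarith
  have hG : (0:ℝ) < (p-2)*A := mul_pos h2 hA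
  set M : ℝ := ((p-3)/(p-2)) * ((p-2)*A) ^ (-(1/(p-3))) with hM_def
  have hM : 0 < M := mul_pos (div_pos h3 h2) (Real.rpow_pos_of_pos hG _)
  set D : ℝ := (A/2) ^ (1/(p-3)) with hD_def
  have hD : 0 < D := Real.rpow_pos_of_pos (by linarith) _
  refine ⟨2*C*D/A + 1, by positivity, 2*C/(A*M), by positivity, ?_⟩
  intro τ hτ ℓ hℓ h hhmem
  obtain ⟨hh1, hhℓ⟩ := hhmem
  have hh : (0:ℝ) < h := by linarith
  have hℓ0 : (0:ℝ) < ℓ := by linarith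
  have hb : (0:ℝ) < -τ := by linarith
  rw [abs_of_neg hτ] at hℓ ⊢
  set b : ℝ := -τ with hb_def
  set t : ℝ := b ^ (-(1/(p-3))) with ht_def
  have ht : 0 < t := Real.rpow_pos_of_pos hb _
  -- the minimum value
  set m : ℝ := -(M * b ^ ((p-2)/(p-3))) with hm_def
  have hm : m < 0 := by
    rw [hm_def]
    have : 0 < M * b ^ ((p-2)/(p-3)) := mul_pos hM (Real.rpow_pos_of_pos hb _)
    linarith
  have hτb : τ = -b := by rw [hb_def]; ring
  -- pointwise lower bound
  have pointwise : ∀ x : ℝ, 0 < x → m ≤ τ / x + A / x ^ (p-2) := by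
    intro x hx
    have young := young_aux hp hA hb hx
    have hτx : τ / x = -(b/x) := by rw [hτb]; ring
    rw [hτx, hm_def, hM_def]
    linarith
  -- the infimum is at most m
  set w : ℝ := (((p-2)*A)/b) ^ (1/(p-3)) with hw_def
  have hw : 0 < w := Real.rpow_pos_of_pos (div_pos hG hb) _
  have hwval : τ / w + A / w ^ (p-2) = m := by
    rw [hτb]
    exact attain_aux hp hA hb
  have hbdd : BddBelow (Set.range fun h' : Set.Ioi (0:ℝ) => τ / (h':ℝ) + A / (h':ℝ) ^ (p-2)) := by
    refine ⟨m, ?_⟩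
    rintro _ ⟨⟨x, hx⟩, rfl⟩
    exact pointwise x hx
  have hIle : (⨅ h' : Set.Ioi (0 : ℝ), (τ / (h' : ℝ) + A / (h' : ℝ) ^ (p - 2))) ≤ m :=
    (ciInf_le hbdd (⟨w, hw⟩ : Set.Ioi (0:ℝ))).trans_eq hwval
  -- the perturbation
  have hε : 0 < 2*C/(A*M) * ℓ⁻¹ * t :=
    mul_pos (mul_pos (by positivity) (inv_pos.mpr hℓ0)) ht
  have hRHS : (⨅ h' : Set.Ioi (0 : ℝ), (τ / (h' : ℝ) + A / (h' : ℝ) ^ (p - 2)))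
      * (1 + 2*C/(A*M) * ℓ⁻¹ * t) ≤ m * (1 + 2*C/(A*M) * ℓ⁻¹ * t) :=
    mul_le_mul_of_nonneg_right hIle (by linarith)
  -- key rpow identities
  have e_ts : t ^ (p-3) = b⁻¹ := by
    rw [ht_def, ← Real.rpow_mul hb.le,
      show (-(1/(p-3)))*(p-3) = -1 by field_simp, Real.rpow_neg_one]
  have e_Ds : D ^ (p-3) = A/2 := rpow_one_div_rpow (by linarith) h3.ne'
  have e_bt : b ^ ((p-2)/(p-3)) * t = b := by
    rw [ht_def, ← Real.rpow_add hb,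
      show (p-2)/(p-3) + -(1/(p-3)) = 1 by field_simp; ring, Real.rpow_one]
  have e_h3p : h ^ (3-p) = (h ^ (p-3))⁻¹ := by
    rw [show (3-p) = -(p-3) by ring, Real.rpow_neg hh.le]
  have e_hsplit : h ^ (p-2) = h ^ (p-3) * h := by
    rw [show p-2 = (p-3)+1 by ring, Real.rpow_add hh, Real.rpow_one]
  have hhs : (0:ℝ) < h ^ (p-3) := Real.rpow_pos_of_pos hh _
  have e_Dt : (D*t) ^ (p-3) = (A/2) * b⁻¹ := by
    rw [Real.mul_rpow hD.le ht.le, e_Ds, e_ts]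
  have hmε : m * (2*C/(A*M) * ℓ⁻¹ * t) = -(2*C/A * b / ℓ) := by
    have : m * (2*C/(A*M) * ℓ⁻¹ * t)
        = -((2*C/(A*M)) * M * (b ^ ((p-2)/(p-3)) * t) * ℓ⁻¹) := by
      rw [hm_def]; ring
    rw [this, e_bt]
    field_simp
  rcases le_or_gt h (D*t) with hcase | hcase
  · -- small h : energy dominates the correction
    have hDt : h ^ (p-3) ≤ (D*t) ^ (p-3) := Real.rpow_le_rpow hh.le hcase h3.le
    have hbh : b * h ^ (p-3) ≤ A/2 := by
      calc b * h ^ (p-3) ≤ b * ((A/2) * b⁻¹) := by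
            rw [← e_Dt]; exact mul_le_mul_of_nonneg_left hDt hb.le
        _ = A/2 := by field_simp
    have hlow : (A/2) / h ^ (p-2) ≤ τ / h + A / h ^ (p-2) := by
      have heq : τ / h + A / h ^ (p-2) = (A - b * h ^ (p-3)) / h ^ (p-2) := by
        rw [hτb, e_hsplit]; field_simp; ring
      rw [heq]
      gcongr
      linarith
    have hcorr : C * h ^ (3-p) / ℓ ≤ (A/2) / h ^ (p-2) := by
      rw [e_h3p, e_hsplit, div_le_div_iff₀ hℓ0 (by positivity)]
      have hId : C * (h ^ (p-3))⁻¹ * (h ^ (p-3) * h) = C * h := by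
        field_simp
      rw [hId]
      have h1' : C * h ≤ C * (D*t) := mul_le_mul_of_nonneg_left hcase hC.le
      have h2' : A/2 * ((2*C*D/A + 1) * t) ≤ A/2 * ℓ :=
        mul_le_mul_of_nonneg_left hℓ (by linarith)
      have h3' : A/2 * ((2*C*D/A + 1) * t) = C*D*t + (A/2)*t := by
        field_simp
      have h4' : 0 < (A/2)*t := by positivity
      linarith
    have hneg : m * (1 + 2*C/(A*M) * ℓ⁻¹ * t) ≤ 0 :=
      mul_nonpos_iff.mpr (Or.inr ⟨hm.le, by linarith⟩)
    refine le_trans hRHS ?_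
    linarith
  · -- large h : the correction is beaten by the shift of the minimum
    have hDt : (D*t) ^ (p-3) ≤ h ^ (p-3) := Real.rpow_le_rpow (mul_pos hD ht).le hcase.le h3.le
    have hDts : (0:ℝ) < (D*t) ^ (p-3) := Real.rpow_pos_of_pos (mul_pos hD ht) _
    have hinv : (h ^ (p-3))⁻¹ ≤ ((D*t) ^ (p-3))⁻¹ := by
      exact inv_anti₀ hDts hDt
    have hb3 : h ^ (3-p) ≤ 2/A * b := by
      rw [e_h3p]
      calc (h ^ (p-3))⁻¹ ≤ ((D*t) ^ (p-3))⁻¹ := hinv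
        _ = 2/A * b := by rw [e_Dt]; field_simp
    have hcorr2 : C * h ^ (3-p) / ℓ ≤ 2*C/A * b / ℓ := by
      gcongr ?_ / ℓ
      calc C * h ^ (3-p) ≤ C * (2/A * b) := mul_le_mul_of_nonneg_left hb3 hC.le
        _ = 2*C/A * b := by ring
    have hpt := pointwise h hh
    have hexp : m * (1 + 2*C/(A*M) * ℓ⁻¹ * t)
        = m + m * (2*C/(A*M) * ℓ⁻¹ * t) := by ring
    refine le_trans hRHS ?_
    rw [hexp, hmε]
    linarith
end
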